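/- Let g : [0,1]^s → ℝ be upper semi-continuous, and suppose that for all x ∈ [0,1]^s, all ε, δ ≥ 0 and indices i, j with x − ε·eᵢ ∈ [0,1]^s and x + ε·eᵢ + δ·eⱼ ∈ [0,1]^s, one has g(x − ε·eᵢ) + g(x + ε·eᵢ + δ·eⱼ) ≤ g(x) + g(x + δ·eⱼ). Then g satisfies: g(x) + g(x + ε·eᵢ + δ·eⱼ) ≤ g(x + ε·eᵢ) + g(x + δ·eⱼ) whenever x, x + ε·eᵢ + δ·eⱼ ∈ [0,1]^s. -/

import Mathlib

open Set Filter

/-- The `i`-th standard unit vector in `ℝ^s`. -/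
def unitVec (s : ℕ) (i : Fin s) : Fin s → ℝ := Pi.single i 1

lemma unitVec_nonneg (s : ℕ) (i : Fin s) : (0 : Fin s → ℝ) ≤ unitVec s i := by
  intro k
  simp only [unitVec, Pi.zero_apply, Pi.single_apply]
  split <;> norm_num

lemma mem_cube (s : ℕ) (x : Fin s → ℝ) (ε δ t r : ℝ) (i j : Fin s)
    (hx : x ∈ Set.Icc (0 : Fin s → ℝ) 1)
    (hmem : x + ε • unitVec s i + δ • unitVec s j ∈ Set.Icc (0 : Fin s → ℝ) 1)
    (ht0 : 0 ≤ t) (ht : t ≤ ε) (hr0 : 0 ≤ r) (hr : r ≤ δ) :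
    x + t • unitVec s i + r • unitVec s j ∈ Set.Icc (0 : Fin s → ℝ) 1 := by
  have hU := unitVec_nonneg s i
  have hV := unitVec_nonneg s j
  constructor
  · intro k
    have h0 := hx.1 k
    have h1 : 0 ≤ t * unitVec s i k := mul_nonneg ht0 (hU k)
    have h2 : 0 ≤ r * unitVec s j k := mul_nonneg hr0 (hV k)
    simp only [Pi.add_apply, Pi.smul_apply, smul_eq_mul, Pi.zero_apply] at *
    linarith
  · intro k
    have h0 := hmem.2 k
    have h1 : t * unitVec s i k ≤ ε * unitVec s i k :=
      mul_le_mul_of_nonneg_right ht (hU k)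
    have h2 : r * unitVec s j k ≤ δ * unitVec s j k :=
      mul_le_mul_of_nonneg_right hr (hV k)
    simp only [Pi.add_apply, Pi.smul_apply, smul_eq_mul, Pi.one_apply] at *
    linarith

lemma key_step (s : ℕ) (g : (Fin s → ℝ) → ℝ)
    (hineq : ∀ x : Fin s → ℝ, ∀ ε δ : ℝ, 0 ≤ ε → 0 ≤ δ → ∀ i j : Fin s,
        x - ε • unitVec s i ∈ Set.Icc (0 : Fin s → ℝ) 1 →
        x + ε • unitVec s i + δ • unitVec s j ∈ Set.Icc (0 : Fin s → ℝ) 1 →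
        g (x - ε • unitVec s i) + g (x + ε • unitVec s i + δ • unitVec s j) ≤
          g x + g (x + δ • unitVec s j))
    (x : Fin s → ℝ) (hx : x ∈ Set.Icc (0 : Fin s → ℝ) 1) (ε δ : ℝ)
    (hε : 0 ≤ ε) (hδ : 0 ≤ δ) (i j : Fin s)
    (hmem : x + ε • unitVec s i + δ • unitVec s j ∈ Set.Icc (0 : Fin s → ℝ) 1)
    (n : ℕ) (hn : 1 ≤ n) :
    g (x + ε • unitVec s i + δ • unitVec s j) ≤
      g (x + (ε / n) • unitVec s i + δ • unitVec s j)
        + g (x + (ε - ε / n) • unitVec s i) - g x := by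
  set U := unitVec s i with hUdef
  set V := unitVec s j with hVdef
  set c := ε / n with hc
  have hn0 : (0:ℝ) < n := by exact_mod_cast hn
  have hc0 : 0 ≤ c := div_nonneg hε (le_of_lt hn0)
  have hnc : (n:ℝ) * c = ε := by rw [hc]; field_simp [hn0.ne']
  have claim : ∀ m : ℕ, 1 ≤ m → m ≤ n →
      g (x + ((m:ℝ) * c) • U + δ • V) ≤
        g (x + c • U + δ • V) + g (x + (((m:ℝ) - 1) * c) • U) - g x := by
    intro m hm
    induction m, hm using Nat.le_induction with
    | base =>
      intro _
      have e1 : x + (((1:ℕ):ℝ) * c) • U + δ • V = x + c • U + δ • V := by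
        norm_num
      have e2 : x + ((((1:ℕ):ℝ) - 1) * c) • U = x := by
        push_cast
        have : ((1:ℝ) - 1) * c = 0 := by ring
        rw [this, zero_smul, add_zero]
      rw [e1, e2]
      linarith
    | succ m hm ih =>
      intro hmn
      have ih' := ih (le_trans (Nat.le_succ m) hmn)
      have hm' : (1:ℝ) ≤ (m:ℝ) := by exact_mod_cast hm
      have hmn'' : ((m:ℝ) + 1) ≤ (n:ℝ) := by exact_mod_cast hmn
      have H1 : x + (((m:ℝ) - 1) * c) • U ∈ Set.Icc (0 : Fin s → ℝ) 1 := by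
        have := mem_cube s x ε δ (((m:ℝ) - 1) * c) 0 i j hx hmem
          (mul_nonneg (by linarith) hc0)
          (by nlinarith [mul_nonneg (by linarith : (0:ℝ) ≤ (n:ℝ) - ((m:ℝ) - 1)) hc0])
          le_rfl hδ
        simpa using this
      have H2 : x + (((m:ℝ) + 1) * c) • U + δ • V ∈ Set.Icc (0 : Fin s → ℝ) 1 :=
        mem_cube s x ε δ (((m:ℝ) + 1) * c) δ i j hx hmem
          (mul_nonneg (by linarith) hc0)
          (by nlinarith [mul_nonneg (by linarith : (0:ℝ) ≤ (n:ℝ) - ((m:ℝ) + 1)) hc0])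
          hδ le_rfl
      have e1 : x + ((m:ℝ) * c) • U - c • U = x + (((m:ℝ) - 1) * c) • U := by
        module
      have e2 : x + ((m:ℝ) * c) • U + c • U + δ • V
          = x + (((m:ℝ) + 1) * c) • U + δ • V := by
        module
      have step := hineq (x + ((m:ℝ) * c) • U) c δ hc0 hδ i j
        (by rw [e1]; exact H1) (by rw [e2]; exact H2)
      rw [e1, e2] at step
      push_cast
      have e3 : ((m:ℝ) + 1 - 1) * c = (m:ℝ) * c := by ring
      rw [e3]
      linarith
  have h := claim n hn le_rfl
  have e1 : x + ((n:ℝ) * c) • U + δ • V = x + ε • U + δ • V := by rw [hnc]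
  have e2 : x + (((n:ℝ) - 1) * c) • U = x + (ε - c) • U := by
    have : ((n:ℝ) - 1) * c = ε - c := by rw [← hnc]; ring
    rw [this]
  rw [e1, e2] at h
  exact h

theorem stmt_3 (s : ℕ) (g : (Fin s → ℝ) → ℝ)
    (husc : ∀ x ∈ Set.Icc (0 : Fin s → ℝ) 1,
      UpperSemicontinuousWithinAt g (Set.Icc (0 : Fin s → ℝ) 1) x)
    (hineq : ∀ x : Fin s → ℝ, ∀ ε δ : ℝ, 0 ≤ ε → 0 ≤ δ → ∀ i j : Fin s,
        x - ε • unitVec s i ∈ Set.Icc (0 : Fin s → ℝ) 1 →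
        x + ε • unitVec s i + δ • unitVec s j ∈ Set.Icc (0 : Fin s → ℝ) 1 →
        g (x - ε • unitVec s i) + g (x + ε • unitVec s i + δ • unitVec s j) ≤
          g x + g (x + δ • unitVec s j)) :
    ∀ x ∈ Set.Icc (0 : Fin s → ℝ) 1, ∀ ε δ : ℝ, 0 ≤ ε → 0 ≤ δ → ∀ i j : Fin s,
      x + ε • unitVec s i + δ • unitVec s j ∈ Set.Icc (0 : Fin s → ℝ) 1 →
      g x + g (x + ε • unitVec s i + δ • unitVec s j) ≤
        g (x + ε • unitVec s i) + g (x + δ • unitVec s j) := by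
  intro x hx ε δ hε hδ i j hmem
  set U := unitVec s i with hUdef
  set V := unitVec s j with hVdef
  by_contra hlt
  push_neg at hlt
  set η := (g x + g (x + ε • U + δ • V) - (g (x + ε • U) + g (x + δ • V))) / 2 with hηdef
  have hηpos : 0 < η := by
    rw [hηdef]; linarith
  -- the two limit points are in the cube
  have hmemV : x + δ • V ∈ Set.Icc (0 : Fin s → ℝ) 1 := by
    have := mem_cube s x ε δ 0 δ i j hx hmem le_rfl hε hδ le_rfl
    simpa using this
  have hmemU : x + ε • U ∈ Set.Icc (0 : Fin s → ℝ) 1 := by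
    have := mem_cube s x ε δ ε 0 i j hx hmem hε le_rfl le_rfl hδ
    simpa using this
  -- sequences
  set a : ℕ → Fin s → ℝ := fun n => x + (ε / n) • U + δ • V with ha
  set b : ℕ → Fin s → ℝ := fun n => x + (ε - ε / n) • U with hb
  have ht0 : Tendsto (fun n : ℕ => ε / (n:ℝ)) atTop (nhds 0) :=
    tendsto_const_div_atTop_nhds_zero_nat ε
  have hta : Tendsto a atTop (nhds (x + δ • V)) := by
    have h1 : Tendsto (fun n : ℕ => x + (ε / (n:ℝ)) • U + δ • V) atTop
        (nhds (x + (0:ℝ) • U + δ • V)) :=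
      (((ht0.smul_const U).const_add x).add_const (δ • V))
    simpa using h1
  have htb : Tendsto b atTop (nhds (x + ε • U)) := by
    have h0 : Tendsto (fun n : ℕ => ε - ε / (n:ℝ)) atTop (nhds (ε - 0)) :=
      tendsto_const_nhds.sub ht0
    have h1 : Tendsto (fun n : ℕ => x + (ε - ε / (n:ℝ)) • U) atTop
        (nhds (x + (ε - 0) • U)) :=
      ((h0.smul_const U).const_add x)
    simpa using h1
  have hdivmem : ∀ n : ℕ, 1 ≤ n → (0 ≤ ε / (n:ℝ) ∧ ε / (n:ℝ) ≤ ε) := by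
    intro n hn
    have hn' : (1:ℝ) ≤ (n:ℝ) := by exact_mod_cast hn
    exact ⟨div_nonneg hε (by linarith), div_le_self hε hn'⟩
  have hain : ∀ n : ℕ, 1 ≤ n → a n ∈ Set.Icc (0 : Fin s → ℝ) 1 := by
    intro n hn
    obtain ⟨h1, h2⟩ := hdivmem n hn
    exact mem_cube s x ε δ (ε / n) δ i j hx hmem h1 h2 hδ le_rfl
  have hbin : ∀ n : ℕ, 1 ≤ n → b n ∈ Set.Icc (0 : Fin s → ℝ) 1 := by
    intro n hn
    obtain ⟨h1, h2⟩ := hdivmem n hn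
    have := mem_cube s x ε δ (ε - ε / n) 0 i j hx hmem (by linarith) (by linarith)
      le_rfl hδ
    simpa using this
  have hta' : Tendsto a atTop (nhdsWithin (x + δ • V) (Set.Icc (0 : Fin s → ℝ) 1)) :=
    tendsto_nhdsWithin_of_tendsto_nhds_of_eventually_within a hta
      (eventually_atTop.2 ⟨1, hain⟩)
  have htb' : Tendsto b atTop (nhdsWithin (x + ε • U) (Set.Icc (0 : Fin s → ℝ) 1)) :=
    tendsto_nhdsWithin_of_tendsto_nhds_of_eventually_within b htb
      (eventually_atTop.2 ⟨1, hbin⟩)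
  have hevV : ∀ᶠ z in nhdsWithin (x + δ • V) (Set.Icc (0 : Fin s → ℝ) 1),
      g z < g (x + δ • V) + η :=
    husc (x + δ • V) hmemV (g (x + δ • V) + η) (by linarith)
  have hevU : ∀ᶠ z in nhdsWithin (x + ε • U) (Set.Icc (0 : Fin s → ℝ) 1),
      g z < g (x + ε • U) + η :=
    husc (x + ε • U) hmemU (g (x + ε • U) + η) (by linarith)
  have h1 : ∀ᶠ n in atTop, g (a n) < g (x + δ • V) + η := hta'.eventually hevV
  have h2 : ∀ᶠ n in atTop, g (b n) < g (x + ε • U) + η := htb'.eventually hevU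
  obtain ⟨n, hn⟩ := ((h1.and h2).and (eventually_ge_atTop 1)).exists
  obtain ⟨⟨hga, hgb⟩, hn1⟩ := hn
  have hkey := key_step s g hineq x hx ε δ hε hδ i j hmem n hn1
  rw [← hUdef, ← hVdef] at hkey
  have hga' : g (a n) < g (x + δ • V) + η := hga
  have hgb' : g (b n) < g (x + ε • U) + η := hgb
  rw [ha] at hga'
  rw [hb] at hgb'
  simp only at hga' hgb'
  rw [hηdef] at hga' hgb'
  linarith [hkey, hga', hgb']
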